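/- Let α_r > 0 and let H be a {2,r}-graph such that both the order of its maximum complete {2,r}-subgraph and the number of vertices covered by H^2 equal t, where t ≥ α_r/(r-2)! + 1. Then the maximum over the standard simplex of L(H,x) = Σ_{ij ∈ E(H^2)} x_i x_j + α_r Σ_{e ∈ E(H^r)} Π_{i∈e} x_i equals (t-1)/(2t) + α_r Π_{i=1}^{r-1}(t-i)/(r! t^{r-1}). -/

import Mathlib

open Finset

def stdSimplex' (n : ℕ) : Set (Fin n → ℝ) :=
  {x | (∀ i, 0 ≤ x i) ∧ ∑ i, x i = 1}

lemma amgm (u v : ℝ) (hu : 0 ≤ u) (hv : 0 ≤ v) (k : ℕ) (hk : 1 ≤ k) :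
    v * u ^ (k - 1) ≤ ((v + ((k : ℝ) - 1) * u) / k) ^ k := by
  have hk0 : (0:ℝ) < k := by exact_mod_cast hk
  rcases eq_or_lt_of_le hu with h0 | hu
  · rcases eq_or_lt_of_le hk with h1 | h2
    · simp [← h1, ← h0]
    · have : k - 1 ≠ 0 := by omega
      rw [← h0]
      simp [this]
      positivity
  · have ha : (-2:ℝ) ≤ (v - u) / (k * u) := by
      have h1 : (0:ℝ) ≤ (v - u) / (k * u) + 1 := by
        have : (v - u) / (k * u) + 1 = (v + (k-1)*u)/(k*u) := by
          field_simp; ring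
        rw [this]
        have hk1 : (1:ℝ) ≤ k := by exact_mod_cast hk
        apply div_nonneg (by nlinarith) (by positivity)
      linarith
    have hb := one_add_mul_le_pow ha k
    have hc : (0:ℝ) < u ^ k := by positivity
    have hd : 1 + (k:ℝ) * ((v - u) / (k * u)) = v / u := by
      field_simp; ring
    rw [hd] at hb
    have he : u ^ k * (v / u) ≤ u ^ k * (1 + (v - u) / (k * u)) ^ k := by
      exact mul_le_mul_of_nonneg_left hb (le_of_lt hc)
    calc v * u ^ (k-1) = u ^ k * (v / u) := by
          have hkk : k = (k-1) + 1 := by omega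
          rw [hkk, pow_succ]
          field_simp
          ring_nf; simp
      _ ≤ u ^ k * (1 + (v - u) / (k * u)) ^ k := he
      _ = (u * (1 + (v - u) / (k * u))) ^ k := by rw [mul_pow]
      _ = ((v + ((k : ℝ) - 1) * u) / k) ^ k := by
          congr 1
          field_simp
          ring

lemma sc (m j : ℕ) (u a : ℝ) (hu : 0 ≤ u) (ha : 0 ≤ a) :
    (m.choose (j+1) : ℝ) * u ^ (j+1) + (m.choose j : ℝ) * a * u ^ j
      ≤ ((m+1).choose (j+1) : ℝ) * ((a + m * u) / (m + 1)) ^ (j+1) := by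
  rcases le_or_gt (j+1) (m+1) with hkm | hkm
  · have id1 : ((m+1).choose (j+1) : ℝ) * (j+1) = (m+1) * (m.choose j) := by
      have := Nat.add_one_mul_choose_eq m j
      exact_mod_cast congrArg (Nat.cast : ℕ → ℝ) this.symm
    have id2 : ((m+1).choose (j+1) : ℝ) * ((m:ℝ) + 1 - (j+1)) = (m+1) * (m.choose (j+1)) := by
      have hp : ((m+1).choose (j+1) : ℝ) = (m.choose j : ℝ) + (m.choose (j+1) : ℝ) := by
        exact_mod_cast congrArg (Nat.cast : ℕ → ℝ) (Nat.choose_succ_succ m j)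
      nlinarith [id1, hp]
    set v : ℝ := (((m:ℝ) + 1 - (j+1)) * u + (j+1) * a) / (m+1) with hv
    have hvn : 0 ≤ v := by
      apply div_nonneg _ (by positivity)
      have : (0:ℝ) ≤ (m:ℝ) + 1 - (j+1) := by
        have : ((j:ℝ)+1) ≤ (m:ℝ)+1 := by exact_mod_cast hkm
        linarith
      positivity
    have key := amgm u v hu hvn (j+1) (by omega)
    simp only [Nat.add_sub_cancel] at key
    have hM : (v + (((j+1) : ℝ) - 1) * u) / (j+1) = (a + m * u) / (m + 1) := by
      rw [hv]
      field_simp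
      ring
    have hL : (m.choose (j+1) : ℝ) * u ^ (j+1) + (m.choose j : ℝ) * a * u ^ j
        = ((m+1).choose (j+1) : ℝ) * (v * u ^ j) := by
      rw [hv, pow_succ]
      field_simp
      linear_combination (-(u^j*u))*id2 - (a*u^j)*id1
    rw [hL]
    calc ((m+1).choose (j+1) : ℝ) * (v * u ^ j)
        ≤ ((m+1).choose (j+1) : ℝ) * (((v + (((j+1):ℝ) - 1) * u) / (j+1)) ^ (j+1)) := by
          apply mul_le_mul_of_nonneg_left _ (by positivity)
          exact_mod_cast key
      _ = _ := by rw [hM]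
  · have h1 : m.choose (j+1) = 0 := Nat.choose_eq_zero_of_lt (by omega)
    have h2 : m.choose j = 0 := Nat.choose_eq_zero_of_lt (by omega)
    rw [h1, h2]
    simp
    positivity

lemma maclaurin {n : ℕ} (x : Fin n → ℝ) (hx : ∀ i, 0 ≤ x i) (A : Finset (Fin n)) :
    ∀ k, ∑ e ∈ A.powersetCard k, ∏ i ∈ e, x i
      ≤ (A.card.choose k : ℝ) * ((∑ i ∈ A, x i) / A.card) ^ k := by
  classical
  induction A using Finset.induction_on with
  | empty =>
    intro k
    cases k with
    | zero => simp
    | succ j => rw [Finset.powersetCard_eq_empty.mpr (by simp)]; simp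
  | @insert a A ha IH =>
    intro k
    cases k with
    | zero => simp
    | succ j =>
      rw [Finset.powersetCard_succ_insert ha]
      have hdisj : Disjoint (A.powersetCard (j+1)) ((A.powersetCard j).image (insert a)) := by
        rw [Finset.disjoint_left]
        intro e he he'
        rw [Finset.mem_powersetCard] at he
        obtain ⟨f, hf, rfl⟩ := Finset.mem_image.mp he'
        rw [Finset.mem_powersetCard] at hf
        exact ha (he.1 (Finset.mem_insert_self a f))
      rw [Finset.sum_union hdisj]
      have himg : ∑ e ∈ (A.powersetCard j).image (insert a), ∏ i ∈ e, x i
          = x a * ∑ e ∈ A.powersetCard j, ∏ i ∈ e, x i := by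
        rw [Finset.sum_image, Finset.mul_sum]
        · apply Finset.sum_congr rfl
          intro e he
          rw [Finset.mem_powersetCard] at he
          rw [Finset.prod_insert (fun h => ha (he.1 h))]
        · intro e he f hf hef
          rw [Finset.mem_coe, Finset.mem_powersetCard] at he hf
          have hae : a ∉ e := fun h => ha (he.1 h)
          have haf : a ∉ f := fun h => ha (hf.1 h)
          have := congrArg (Finset.erase · a) hef
          simpa [Finset.erase_insert hae, Finset.erase_insert haf] using this
      rw [himg]
      set m := A.card with hm
      set S := ∑ i ∈ A, x i with hS
      have hS0 : 0 ≤ S := Finset.sum_nonneg fun i _ => hx i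
      have hu : 0 ≤ S / m := div_nonneg hS0 (by positivity)
      have hxa := hx a
      have step := sc m j (S / m) (x a) hu hxa
      have hmu : (m : ℝ) * (S / m) = S := by
        rcases Nat.eq_zero_or_pos m with h0 | hpos
        · have hA : A = ∅ := Finset.card_eq_zero.mp h0
          have : S = 0 := by rw [hS, hA]; simp
          rw [this, h0]; simp
        · field_simp
      have hcard : (insert a A).card = m + 1 := Finset.card_insert_of_notMem ha
      have hsum : ∑ i ∈ insert a A, x i = x a + S := Finset.sum_insert ha
      rw [hcard, hsum]
      calc ∑ e ∈ A.powersetCard (j+1), ∏ i ∈ e, x i + x a * ∑ e ∈ A.powersetCard j, ∏ i ∈ e, x i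
          ≤ (m.choose (j+1) : ℝ) * (S/m) ^ (j+1) + x a * ((m.choose j : ℝ) * (S/m) ^ j) := by
            have h1 := IH (j+1)
            have h2 := IH j
            have h3 : x a * (∑ e ∈ A.powersetCard j, ∏ i ∈ e, x i)
                ≤ x a * ((m.choose j : ℝ) * (S/m) ^ j) := mul_le_mul_of_nonneg_left h2 hxa
            exact add_le_add h1 h3
        _ ≤ ((m+1).choose (j+1) : ℝ) * ((x a + m * (S/m)) / (m + 1)) ^ (j+1) := by
            calc (m.choose (j+1) : ℝ) * (S/m) ^ (j+1) + x a * ((m.choose j : ℝ) * (S/m) ^ j)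
                = (m.choose (j+1) : ℝ) * (S/m) ^ (j+1) + (m.choose j : ℝ) * x a * (S/m) ^ j := by ring
              _ ≤ _ := step
        _ = ((m+1).choose (j+1) : ℝ) * ((x a + S) / ((m:ℝ) + 1)) ^ (j+1) := by rw [hmu]
        _ = (((m+1):ℕ).choose (j+1) : ℝ) * ((x a + S) / (((m+1):ℕ):ℝ)) ^ (j+1) := by push_cast; ring_nf

lemma bern2 (b a : ℝ) (hb : 0 ≤ b) (ha : 0 ≤ a) (j : ℕ) :
    b^(j+1) + ((j:ℝ)+1) * b^j * a ≤ (b+a)^(j+1) := by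
  induction j with
  | zero => simp
  | succ j IH =>
    have hb1 : (0:ℝ) ≤ b ^ j := by positivity
    have h2 : (b+a)^(j+1+1) = (b+a) * (b+a)^(j+1) := by ring
    have h3 : (b+a) * (b^(j+1) + ((j:ℝ)+1) * b^j * a) ≤ (b+a) * (b+a)^(j+1) :=
      mul_le_mul_of_nonneg_left IH (by linarith)
    rw [h2]
    have h4 : (b+a) * (b^(j+1) + ((j:ℝ)+1)*b^j*a)
        = b^(j+1+1) + ((j:ℝ)+1+1)*b^(j+1)*a + ((j:ℝ)+1)*(b^j*a^2) := by ring
    have h5 : (0:ℝ) ≤ ((j:ℝ)+1)*(b^j*a^2) := by positivity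
    push_cast
    linarith

lemma esum_insert {n : ℕ} (x : Fin n → ℝ) {a : Fin n} {A : Finset (Fin n)} (ha : a ∉ A) (j : ℕ) :
    ∑ e ∈ (insert a A).powersetCard (j+1), ∏ i ∈ e, x i
      = ∑ e ∈ A.powersetCard (j+1), ∏ i ∈ e, x i + x a * ∑ e ∈ A.powersetCard j, ∏ i ∈ e, x i := by
  classical
  rw [Finset.powersetCard_succ_insert ha]
  have hdisj : Disjoint (A.powersetCard (j+1)) ((A.powersetCard j).image (insert a)) := by
    rw [Finset.disjoint_left]
    intro e he he'
    rw [Finset.mem_powersetCard] at he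
    obtain ⟨f, hf, rfl⟩ := Finset.mem_image.mp he'
    rw [Finset.mem_powersetCard] at hf
    exact ha (he.1 (Finset.mem_insert_self a f))
  rw [Finset.sum_union hdisj]
  congr 1
  rw [Finset.sum_image, Finset.mul_sum]
  · apply Finset.sum_congr rfl
    intro e he
    rw [Finset.mem_powersetCard] at he
    rw [Finset.prod_insert (fun h => ha (he.1 h))]
  · intro e he f hf hef
    rw [Finset.mem_coe, Finset.mem_powersetCard] at he hf
    have hae : a ∉ e := fun h => ha (he.1 h)
    have haf : a ∉ f := fun h => ha (hf.1 h)
    have := congrArg (Finset.erase · a) hef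
    simpa [Finset.erase_insert hae, Finset.erase_insert haf] using this

lemma phi_bound {n : ℕ} (x : Fin n → ℝ) (hx : ∀ i, 0 ≤ x i) (W : Finset (Fin n)) :
    ∀ (C : Finset (Fin n)), Disjoint W C → ∀ j,
    ∑ e ∈ (W ∪ C).powersetCard j, ∏ i ∈ e, x i
      ≤ ∑ k ∈ Finset.range (j+1), (W.card.choose k : ℝ) * ((∑ i ∈ W, x i)/W.card)^k
          * ((∑ i ∈ C, x i)^(j-k) / (Nat.factorial (j-k))) := by
  classical
  intro C
  induction C using Finset.induction_on with
  | empty =>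
    intro _ j
    rw [Finset.union_empty]
    have hR : ∑ k ∈ Finset.range (j+1), (W.card.choose k : ℝ) * ((∑ i ∈ W, x i)/W.card)^k
          * ((∑ i ∈ (∅: Finset (Fin n)), x i)^(j-k) / (Nat.factorial (j-k)))
        = (W.card.choose j : ℝ) * ((∑ i ∈ W, x i)/W.card)^j := by
      rw [Finset.sum_eq_single_of_mem j (Finset.self_mem_range_succ j)]
      · simp
      · intro k hk hkj
        have hjk : j - k ≠ 0 := by
          rw [Finset.mem_range] at hk; omega
        simp [Finset.sum_empty, zero_pow hjk]
    rw [hR]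
    exact maclaurin x hx W j
  | @insert a C ha IH =>
    intro hdisj j
    have hdC : Disjoint W C := hdisj.mono_right (Finset.subset_insert a C)
    have haW : a ∉ W := by
      intro h
      exact Finset.disjoint_left.mp hdisj h (Finset.mem_insert_self a C)
    have haWC : a ∉ W ∪ C := by
      simp only [Finset.mem_union]
      rintro (h | h)
      · exact haW h
      · exact ha h
    have hins : W ∪ insert a C = insert a (W ∪ C) := by rw [Finset.union_insert]
    have hsum : ∑ i ∈ insert a C, x i = x a + ∑ i ∈ C, x i := Finset.sum_insert ha
    set u : ℝ := (∑ i ∈ W, x i)/W.card with hu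
    set c : ℝ := ∑ i ∈ C, x i with hc
    have hc0 : 0 ≤ c := Finset.sum_nonneg fun i _ => hx i
    have hu0 : 0 ≤ u := div_nonneg (Finset.sum_nonneg fun i _ => hx i) (by positivity)
    have hxa := hx a
    set d : ℕ → ℝ := fun k => (W.card.choose k : ℝ) with hd
    cases j with
    | zero =>
      simp only [Finset.powersetCard_zero]
      rw [hsum]
      simp
    | succ J =>
      rw [hins, esum_insert x haWC J, hsum]
      have h1 := IH hdC (J+1)
      have h2 := IH hdC J
      have h3 : x a * (∑ e ∈ (W ∪ C).powersetCard J, ∏ i ∈ e, x i)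
          ≤ x a * (∑ k ∈ Finset.range (J+1), d k * u^k * (c^(J-k)/(Nat.factorial (J-k)))) :=
        mul_le_mul_of_nonneg_left h2 hxa
      have key : (∑ k ∈ Finset.range (J+2), d k * u^k * (c^(J+1-k)/(Nat.factorial (J+1-k))))
            + x a * (∑ k ∈ Finset.range (J+1), d k * u^k * (c^(J-k)/(Nat.factorial (J-k))))
          ≤ ∑ k ∈ Finset.range (J+2), d k * u^k * ((c + x a)^(J+1-k)/(Nat.factorial (J+1-k))) := by
        rw [Finset.sum_range_succ, Finset.sum_range_succ (fun k => d k * u^k * ((c + x a)^(J+1-k)/(Nat.factorial (J+1-k))))]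
        have hlast : d (J+1) * u^(J+1) * (c^(J+1-(J+1))/(Nat.factorial (J+1-(J+1))))
            = d (J+1) * u^(J+1) * ((c + x a)^(J+1-(J+1))/(Nat.factorial (J+1-(J+1)))) := by
          simp
        rw [Finset.mul_sum]
        have hAB : (∑ k ∈ Finset.range (J+1), d k * u^k * (c^(J+1-k)/(Nat.factorial (J+1-k))))
            + ∑ k ∈ Finset.range (J+1), x a * (d k * u^k * (c^(J-k)/(Nat.factorial (J-k))))
            = ∑ k ∈ Finset.range (J+1), (d k * u^k * (c^(J+1-k)/(Nat.factorial (J+1-k)))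
              + x a * (d k * u^k * (c^(J-k)/(Nat.factorial (J-k))))) :=
          Finset.sum_add_distrib.symm
        have hterm : ∀ k ∈ Finset.range (J+1),
            d k * u^k * (c^(J+1-k)/(Nat.factorial (J+1-k)))
              + x a * (d k * u^k * (c^(J-k)/(Nat.factorial (J-k))))
            ≤ d k * u^k * ((c + x a)^(J+1-k)/(Nat.factorial (J+1-k))) := by
          intro k hk
          rw [Finset.mem_range] at hk
          have hm : J + 1 - k = (J - k) + 1 := by omega
          set m := J - k with hmdef
          rw [hm]
          have hfact : (Nat.factorial (m+1) : ℝ) = ((m:ℝ)+1) * (Nat.factorial m : ℝ) := by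
            rw [Nat.factorial_succ]; push_cast; ring
          have hb := bern2 c (x a) hc0 hxa m
          have hdu : 0 ≤ d k * u^k := by
            apply mul_nonneg _ (by positivity)
            rw [hd]; positivity
          have hstep : c^(m+1)/(Nat.factorial (m+1) : ℝ) + x a * (c^m/(Nat.factorial m : ℝ))
              ≤ (c + x a)^(m+1)/(Nat.factorial (m+1) : ℝ) := by
            have hF0 : (0:ℝ) < (Nat.factorial m : ℝ) := by positivity
            have hF1 : (0:ℝ) < (Nat.factorial (m+1) : ℝ) := by positivity
            have hre : c^(m+1)/(Nat.factorial (m+1):ℝ) + x a * (c^m/(Nat.factorial m:ℝ))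
                = (c^(m+1) + ((m:ℝ)+1) * c^m * x a)/(Nat.factorial (m+1):ℝ) := by
              rw [hfact]; field_simp
            rw [hre]
            gcongr
          calc d k * u^k * (c^(m+1)/(Nat.factorial (m+1)))
                + x a * (d k * u^k * (c^m/(Nat.factorial m)))
              = (d k * u^k) * (c^(m+1)/(Nat.factorial (m+1)) + x a * (c^m/(Nat.factorial m))) := by
                ring
            _ ≤ (d k * u^k) * ((c + x a)^(m+1)/(Nat.factorial (m+1))) :=
                mul_le_mul_of_nonneg_left hstep hdu
            _ = d k * u^k * ((c + x a)^(m+1)/(Nat.factorial (m+1))) := by ring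
        have := Finset.sum_le_sum hterm
        linarith [this, hlast.le, hAB]
      calc ∑ e ∈ (W ∪ C).powersetCard (J+1), ∏ i ∈ e, x i
            + x a * ∑ e ∈ (W ∪ C).powersetCard J, ∏ i ∈ e, x i
          ≤ (∑ k ∈ Finset.range (J+2), d k * u^k * (c^(J+1-k)/(Nat.factorial (J+1-k))))
            + x a * (∑ k ∈ Finset.range (J+1), d k * u^k * (c^(J-k)/(Nat.factorial (J-k)))) := by
            exact add_le_add h1 h3
        _ ≤ ∑ k ∈ Finset.range (J+2), d k * u^k * ((x a + c)^(J+1-k)/(Nat.factorial (J+1-k))) := by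
            rw [show x a + c = c + x a by ring]
            exact key

lemma castdesc (t r : ℕ) : (t.descFactorial r : ℝ) = ∏ i ∈ Finset.range r, ((t:ℝ) - i) := by
  rcases le_or_gt r t with h | h
  · rw [Nat.descFactorial_eq_prod_range, Nat.cast_prod]
    apply Finset.prod_congr rfl
    intro i hi
    rw [Finset.mem_range] at hi
    rw [Nat.cast_sub (by omega)]
  · rw [Nat.descFactorial_eq_zero_iff_lt.mpr h, Nat.cast_zero]
    symm
    apply Finset.prod_eq_zero (Finset.mem_range.mpr h)
    ring

lemma Brec (t k : ℕ) (ht : 2 ≤ t) :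
    ((t.descFactorial (k+1) : ℝ)/(t:ℝ)^(k+1))
      = ((t.descFactorial k : ℝ)/(t:ℝ)^k) * (((t:ℝ) - k)/t) := by
  have ht0 : (t:ℝ) ≠ 0 := by positivity
  rcases le_or_gt k t with h | h
  · rw [Nat.descFactorial_succ, Nat.cast_mul, Nat.cast_sub h]
    field_simp
    ring
  · rw [Nat.descFactorial_eq_zero_iff_lt.mpr h,
      Nat.descFactorial_eq_zero_iff_lt.mpr (by omega)]
    simp

lemma B01 (t k : ℕ) (ht : 2 ≤ t) :
    0 ≤ (t.descFactorial k : ℝ)/(t:ℝ)^k ∧ (t.descFactorial k : ℝ)/(t:ℝ)^k ≤ 1 := by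
  constructor
  · positivity
  · rw [div_le_one (by positivity)]
    exact_mod_cast Nat.descFactorial_le_pow t k

lemma KB (t : ℕ) (ht : 2 ≤ t) : ∀ j k : ℕ, k ≤ j →
    (t.descFactorial k : ℝ)/(t:ℝ)^k
      ≤ (t.descFactorial j : ℝ)/(t:ℝ)^j + ((j:ℝ)*((j:ℝ)-1) - (k:ℝ)*((k:ℝ)-1))/(2*t) := by
  intro j
  induction j with
  | zero =>
    intro k hk
    interval_cases k
    simp
  | succ j IH =>
    intro k hk
    rcases Nat.lt_or_ge k (j+1) with h | h
    · have h1 := IH k (by omega)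
      have h2 := Brec t j ht
      have hB := B01 t j ht
      have ht0 : (0:ℝ) < t := by positivity
      have hj : (t.descFactorial j : ℝ)/(t:ℝ)^j ≤ (t.descFactorial (j+1) : ℝ)/(t:ℝ)^(j+1) + (j:ℝ)/t := by
        rw [h2]
        have : (t.descFactorial j : ℝ)/(t:ℝ)^j * (((t:ℝ) - j)/t)
            = (t.descFactorial j : ℝ)/(t:ℝ)^j - ((t.descFactorial j : ℝ)/(t:ℝ)^j) * ((j:ℝ)/t) := by
          field_simp
        rw [this]
        have : ((t.descFactorial j : ℝ)/(t:ℝ)^j) * ((j:ℝ)/t) ≤ (j:ℝ)/t := by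
          apply mul_le_of_le_one_left (by positivity) hB.2
        linarith
      push_cast
      have : ((j:ℝ)+1)*((j:ℝ)+1-1) = (j:ℝ)*((j:ℝ)-1) + 2*(j:ℝ) := by ring
      rw [this]
      have hexp : ((j:ℝ)*((j:ℝ)-1) + 2*(j:ℝ) - (k:ℝ)*((k:ℝ)-1))/(2*t)
          = ((j:ℝ)*((j:ℝ)-1) - (k:ℝ)*((k:ℝ)-1))/(2*t) + (j:ℝ)/t := by
        field_simp
        ring
      rw [hexp]
      linarith
    · have hkj : k = j + 1 := by omega
      subst hkj
      simp

lemma BI1 (r : ℕ) (s : ℝ) :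
    ∑ k ∈ Finset.range (r+1), (r.choose k : ℝ) * s^k * (1-s)^(r-k) = 1 := by
  have h := add_pow s (1-s) r
  simp only [add_sub_cancel, one_pow] at h
  calc ∑ k ∈ Finset.range (r+1), (r.choose k : ℝ) * s^k * (1-s)^(r-k)
      = ∑ k ∈ Finset.range (r+1), s^k * (1-s)^(r-k) * (r.choose k : ℝ) :=
        Finset.sum_congr rfl fun k _ => by ring
    _ = 1 := h.symm

lemma BI2 (q : ℕ) (s : ℝ) :
    ∑ k ∈ Finset.range (q+3), ((k:ℝ)*((k:ℝ)-1)) * ((q+2).choose k : ℝ) * s^k * (1-s)^(q+2-k)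
      = ((q:ℝ)+2)*((q:ℝ)+1)*s^2 := by
  rw [Finset.sum_range_succ' _ (q+2), Finset.sum_range_succ' _ (q+1)]
  have hterm : ∀ i ∈ Finset.range (q+1),
      (((i+1+1 : ℕ):ℝ)*(((i+1+1 : ℕ):ℝ)-1)) * ((q+2).choose (i+1+1) : ℝ) * s^(i+1+1) * (1-s)^(q+2-(i+1+1))
        = ((q:ℝ)+2)*((q:ℝ)+1)*s^2 * ((q.choose i : ℝ) * s^i * (1-s)^(q-i)) := by
    intro i hi
    rw [Finset.mem_range] at hi
    have e1 := Nat.add_one_mul_choose_eq q i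
    have e2 := Nat.add_one_mul_choose_eq (q+1) (i+1)
    have key : ((q+2).choose (i+2) : ℝ) * ((i:ℝ)+2) * ((i:ℝ)+1) = ((q:ℝ)+2)*((q:ℝ)+1)*(q.choose i : ℝ) := by
      have c1 : ((q:ℝ)+1) * (q.choose i : ℝ) = ((q+1).choose (i+1) : ℝ) * ((i:ℝ)+1) := by
        exact_mod_cast congrArg (Nat.cast : ℕ → ℝ) e1
      have c2 : ((q:ℝ)+2) * ((q+1).choose (i+1) : ℝ) = ((q+2).choose (i+2) : ℝ) * ((i:ℝ)+2) := by
        exact_mod_cast congrArg (Nat.cast : ℕ → ℝ) e2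
      nlinarith [c1, c2]
    have hsub : q + 2 - (i+1+1) = q - i := by omega
    rw [hsub, show (i+1+1) = i+2 by ring]
    push_cast
    linear_combination (s^2 * s^i * (1-s)^(q-i)) * key
  rw [Finset.sum_congr rfl hterm, ← Finset.mul_sum]
  have hb : ∑ i ∈ Finset.range (q+1), (q.choose i : ℝ) * s^i * (1-s)^(q-i) = 1 := by
    have h := add_pow s (1-s) q
    simp only [add_sub_cancel, one_pow] at h
    calc ∑ k ∈ Finset.range (q+1), (q.choose k : ℝ) * s^k * (1-s)^(q-k)
        = ∑ k ∈ Finset.range (q+1), s^k * (1-s)^(q-k) * (q.choose k : ℝ) :=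
          Finset.sum_congr rfl fun k _ => by ring
      _ = 1 := h.symm
  rw [hb]
  push_cast
  ring

lemma choose2cast (t : ℕ) (ht : 2 ≤ t) : (t.choose 2 : ℝ) = (t:ℝ) * ((t:ℝ)-1) / 2 := by
  have h1 : (t.descFactorial 2 : ℝ) = (t:ℝ) * ((t:ℝ)-1) := by
    rw [castdesc]
    rw [Finset.prod_range_succ, Finset.prod_range_succ]
    simp
  have h2 : (t.descFactorial 2 : ℝ) = 2 * (t.choose 2 : ℝ) := by
    have := Nat.descFactorial_eq_factorial_mul_choose t 2
    exact_mod_cast congrArg (Nat.cast : ℕ → ℝ) this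
  linarith

set_option maxHeartbeats 1000000 in
lemma scalar (t r : ℕ) (ht2 : 2 ≤ t) (hr : 3 ≤ r) (α s : ℝ) (hα : 0 < α)
    (hαt : α ≤ ((t:ℝ)-1) * (Nat.factorial (r-2) : ℝ)) (hs0 : 0 ≤ s) (hs1 : s ≤ 1) :
    (t.choose 2 : ℝ) * (s/(t:ℝ))^2
      + α * (∑ k ∈ Finset.range (r+1), (t.choose k : ℝ) * (s/(t:ℝ))^k * ((1-s)^(r-k)/(Nat.factorial (r-k) : ℝ)))
    ≤ (t.choose 2 : ℝ)/(t:ℝ)^2 + α * ((t.choose r : ℝ)/(t:ℝ)^r) := by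
  obtain ⟨q, rfl⟩ : ∃ q, r = q + 2 := ⟨r - 2, by omega⟩
  set r := q + 2 with hrdef
  have ht0 : (0:ℝ) < t := by positivity
  have hs1' : (0:ℝ) ≤ 1 - s := by linarith
  set B : ℕ → ℝ := fun k => (t.descFactorial k : ℝ)/(t:ℝ)^k with hB
  -- rewrite each term
  have hIdent : ∀ k ∈ Finset.range (r+1),
      (t.choose k : ℝ) * (s/(t:ℝ))^k * ((1-s)^(r-k)/(Nat.factorial (r-k) : ℝ))
        = (1/(Nat.factorial r : ℝ)) * ((r.choose k : ℝ) * s^k * (1-s)^(r-k) * B k) := by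
    intro k hk
    rw [Finset.mem_range] at hk
    have hkr : k ≤ r := by omega
    have hd : (t.descFactorial k : ℝ) = (Nat.factorial k : ℝ) * (t.choose k : ℝ) := by
      exact_mod_cast congrArg (Nat.cast : ℕ → ℝ) (Nat.descFactorial_eq_factorial_mul_choose t k)
    have hckk : (r.choose k : ℝ) * (Nat.factorial k : ℝ) * (Nat.factorial (r-k) : ℝ)
        = (Nat.factorial r : ℝ) := by
      exact_mod_cast congrArg (Nat.cast : ℕ → ℝ) (Nat.choose_mul_factorial_mul_factorial hkr)
    have hfk : (0:ℝ) < (Nat.factorial k : ℝ) := by positivity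
    have hfrk : (0:ℝ) < (Nat.factorial (r-k) : ℝ) := by positivity
    have hfr : (0:ℝ) < (Nat.factorial r : ℝ) := by positivity
    simp only [hB]
    rw [hd, div_pow]
    field_simp
    linear_combination (-((t.choose k : ℝ) * s^k * (1-s)^(r-k))) * hckk
  rw [Finset.sum_congr rfl hIdent, ← Finset.mul_sum]
  -- bound the inner sum
  set g : ℕ → ℝ := fun k => (r.choose k : ℝ) * s^k * (1-s)^(r-k) with hg
  have hgnn : ∀ k, 0 ≤ g k := by
    intro k
    rw [hg]
    positivity
  have hsum1 : ∑ k ∈ Finset.range (r+1), g k = 1 := BI1 r s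
  have hsum2 : ∑ k ∈ Finset.range (r+1), ((k:ℝ)*((k:ℝ)-1)) * g k = (r:ℝ)*((r:ℝ)-1)*s^2 := by
    have := BI2 q s
    calc ∑ k ∈ Finset.range (r+1), ((k:ℝ)*((k:ℝ)-1)) * g k
        = ∑ k ∈ Finset.range (q+3), ((k:ℝ)*((k:ℝ)-1)) * ((q+2).choose k : ℝ) * s^k * (1-s)^(q+2-k) := by
          apply Finset.sum_congr rfl
          intro k hk
          rw [hg]
          ring
      _ = ((q:ℝ)+2)*((q:ℝ)+1)*s^2 := this
      _ = (r:ℝ)*((r:ℝ)-1)*s^2 := by push_cast [hrdef]; ring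
  have hstep : ∑ k ∈ Finset.range (r+1), g k * B k
      ≤ B r + ((r:ℝ)*((r:ℝ)-1)/(2*t)) * (1 - s^2) := by
    have h1 : ∀ k ∈ Finset.range (r+1), g k * B k
        ≤ g k * (B r + ((r:ℝ)*((r:ℝ)-1) - (k:ℝ)*((k:ℝ)-1))/(2*t)) := by
      intro k hk
      rw [Finset.mem_range] at hk
      exact mul_le_mul_of_nonneg_left (KB t ht2 r k (by omega)) (hgnn k)
    have h2 := Finset.sum_le_sum h1
    have h3 : ∑ k ∈ Finset.range (r+1), g k * (B r + ((r:ℝ)*((r:ℝ)-1) - (k:ℝ)*((k:ℝ)-1))/(2*t))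
        = (B r + (r:ℝ)*((r:ℝ)-1)/(2*t)) * (∑ k ∈ Finset.range (r+1), g k)
          - (1/(2*t)) * (∑ k ∈ Finset.range (r+1), ((k:ℝ)*((k:ℝ)-1)) * g k) := by
      rw [Finset.mul_sum, Finset.mul_sum, ← Finset.sum_sub_distrib]
      apply Finset.sum_congr rfl
      intro k hk
      field_simp
      ring
    rw [h3, hsum1, hsum2] at h2
    calc ∑ k ∈ Finset.range (r+1), g k * B k
        ≤ (B r + (r:ℝ)*((r:ℝ)-1)/(2*t)) * 1 - (1/(2*t)) * ((r:ℝ)*((r:ℝ)-1)*s^2) := h2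
      _ = B r + ((r:ℝ)*((r:ℝ)-1)/(2*t)) * (1 - s^2) := by ring
  -- assemble
  have hBr : (1/(Nat.factorial r : ℝ)) * B r = (t.choose r : ℝ)/(t:ℝ)^r := by
    have hd : (t.descFactorial r : ℝ) = (Nat.factorial r : ℝ) * (t.choose r : ℝ) := by
      exact_mod_cast congrArg (Nat.cast : ℕ → ℝ) (Nat.descFactorial_eq_factorial_mul_choose t r)
    rw [hB]
    simp only []
    rw [hd]
    have hfr : (0:ℝ) < (Nat.factorial r : ℝ) := by positivity
    field_simp
  have hfact2 : (Nat.factorial r : ℝ) = (r:ℝ)*((r:ℝ)-1)*(Nat.factorial (r-2) : ℝ) := by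
    have : r - 2 = q := by omega
    rw [this, hrdef]
    rw [show q + 2 = (q+1)+1 by ring, Nat.factorial_succ, Nat.factorial_succ]
    push_cast
    ring
  have hchoose2 : (t.choose 2 : ℝ) = (t:ℝ)*((t:ℝ)-1)/2 := choose2cast t ht2
  have hfr : (0:ℝ) < (Nat.factorial r : ℝ) := by positivity
  have hfq : (0:ℝ) < (Nat.factorial (r-2) : ℝ) := by positivity
  have hmono : α * ((1/(Nat.factorial r : ℝ)) * (∑ k ∈ Finset.range (r+1), g k * B k))
      ≤ α * ((1/(Nat.factorial r : ℝ)) * (B r + ((r:ℝ)*((r:ℝ)-1)/(2*t)) * (1 - s^2))) := by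
    apply mul_le_mul_of_nonneg_left _ hα.le
    apply mul_le_mul_of_nonneg_left hstep (by positivity)
  have hlast : (t.choose 2 : ℝ) * (s/(t:ℝ))^2
      + α * ((1/(Nat.factorial r : ℝ)) * (B r + ((r:ℝ)*((r:ℝ)-1)/(2*t)) * (1 - s^2)))
      ≤ (t.choose 2 : ℝ)/(t:ℝ)^2 + α * ((t.choose r : ℝ)/(t:ℝ)^r) := by
    have e1 : α * ((1/(Nat.factorial r : ℝ)) * (B r + ((r:ℝ)*((r:ℝ)-1)/(2*t)) * (1 - s^2)))
        = α * ((t.choose r : ℝ)/(t:ℝ)^r) + α * (1 - s^2) * (((r:ℝ)*((r:ℝ)-1)/(Nat.factorial r : ℝ))/(2*t)) := by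
      rw [← hBr]
      ring
    rw [e1]
    have e2 : ((r:ℝ)*((r:ℝ)-1)/(Nat.factorial r : ℝ)) = 1/(Nat.factorial (r-2) : ℝ) := by
      have hr3 : (3:ℝ) ≤ (r:ℝ) := by exact_mod_cast hr
      rw [hfact2]
      rw [div_eq_div_iff (by nlinarith [hfq]) (by positivity)]
      ring
    rw [e2]
    have e3 : (t.choose 2 : ℝ) * (s/(t:ℝ))^2 = ((t.choose 2 : ℝ)/(t:ℝ)^2) * s^2 := by
      field_simp
    rw [e3, hchoose2]
    have hs2 : 0 ≤ 1 - s^2 := by nlinarith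
    have key : α * (1 - s^2) * ((1/(Nat.factorial (r-2) : ℝ))/(2*t))
        ≤ ((t:ℝ)*((t:ℝ)-1)/2/(t:ℝ)^2) * (1 - s^2) := by
      have hq : α / (Nat.factorial (r-2) : ℝ) ≤ (t:ℝ)-1 := by
        rw [div_le_iff₀ hfq]
        linarith
      have e4 : ((t:ℝ)*((t:ℝ)-1)/2/(t:ℝ)^2) = ((t:ℝ)-1)/(2*t) := by
        field_simp
      rw [e4]
      have e5 : α * (1 - s^2) * ((1/(Nat.factorial (r-2) : ℝ))/(2*t))
          = (α/(Nat.factorial (r-2) : ℝ)) * ((1-s^2)/(2*t)) := by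
        field_simp
      have e6 : (((t:ℝ)-1)/(2*t)) * (1 - s^2) = ((t:ℝ)-1) * ((1-s^2)/(2*t)) := by
        field_simp
      rw [e5, e6]
      apply mul_le_mul_of_nonneg_right hq (by positivity)
    have e7 : ((t:ℝ)*((t:ℝ)-1)/2/(t:ℝ)^2) * (1 - s^2)
        = ((t:ℝ)*((t:ℝ)-1)/2/(t:ℝ)^2) - ((t:ℝ)*((t:ℝ)-1)/2/(t:ℝ)^2) * s^2 := by ring
    linarith [key, e7]
  calc (t.choose 2 : ℝ) * (s/(t:ℝ))^2
      + α * ((1/(Nat.factorial r : ℝ)) * (∑ k ∈ Finset.range (r+1), g k * B k))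
      ≤ (t.choose 2 : ℝ) * (s/(t:ℝ))^2
        + α * ((1/(Nat.factorial r : ℝ)) * (B r + ((r:ℝ)*((r:ℝ)-1)/(2*t)) * (1 - s^2))) := by
        linarith [hmono]
    _ ≤ _ := hlast

/-- Theorem (a): a `{2,r}`-graph whose maximum complete `{2,r}`-subgraph and whose
set of vertices covered by the 2-edges both have order `t ≥ α_r/(r-2)! + 1`. -/
theorem stmt_7 (n r t : ℕ) (hr : 3 ≤ r) (αr : ℝ) (hαr : 0 < αr)
    (E2 Er : Finset (Finset (Fin n)))
    (hE2 : ∀ e ∈ E2, e.card = 2) (hEr : ∀ e ∈ Er, e.card = r)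
    (hcl : ∃ W : Finset (Fin n), W.card = t ∧ W.powersetCard 2 ⊆ E2 ∧ W.powersetCard r ⊆ Er)
    (hmax : ∀ W : Finset (Fin n), W.powersetCard 2 ⊆ E2 → W.powersetCard r ⊆ Er → W.card ≤ t)
    (hcover : (E2.biUnion id).card = t)
    (ht : (t : ℝ) ≥ αr / (Nat.factorial (r - 2)) + 1) :
    IsGreatest {y : ℝ | ∃ x ∈ stdSimplex' n,
        y = (∑ e ∈ E2, ∏ i ∈ e, x i) + αr * ∑ e ∈ Er, ∏ i ∈ e, x i}
      (((t : ℝ) - 1) / (2 * t)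
        + αr * (∏ i ∈ Finset.Icc 1 (r - 1), ((t : ℝ) - i)) / (Nat.factorial r * (t : ℝ) ^ (r - 1))) := by
  classical
  obtain ⟨W, hWt, hW2, hWr⟩ := hcl
  have hfq : (0:ℝ) < (Nat.factorial (r-2) : ℝ) := by positivity
  have ht1 : (1:ℝ) < t := by
    have h0 : 0 < αr / (Nat.factorial (r-2) : ℝ) := by positivity
    linarith
  have ht2 : 2 ≤ t := by
    have : 1 < t := by exact_mod_cast ht1
    omega
  have ht0 : (0:ℝ) < t := by linarith
  have hαt : αr ≤ ((t:ℝ)-1) * (Nat.factorial (r-2) : ℝ) := by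
    have h : αr / (Nat.factorial (r-2):ℝ) ≤ (t:ℝ) - 1 := by linarith
    calc αr = (αr / (Nat.factorial (r-2):ℝ)) * (Nat.factorial (r-2):ℝ) := by field_simp
      _ ≤ ((t:ℝ)-1) * (Nat.factorial (r-2):ℝ) := mul_le_mul_of_nonneg_right h hfq.le
  -- E2 is exactly the pairs of W
  have hWsub : W ⊆ E2.biUnion id := by
    intro w hw
    have hcard : (W.erase w).Nonempty := by
      rw [← Finset.card_pos, Finset.card_erase_of_mem hw, hWt]
      omega
    obtain ⟨w', hw'⟩ := hcard
    have hww : w' ≠ w := Finset.ne_of_mem_erase hw'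
    have hw'W : w' ∈ W := Finset.mem_of_mem_erase hw'
    have hpair : ({w, w'} : Finset (Fin n)) ∈ W.powersetCard 2 := by
      rw [Finset.mem_powersetCard]
      constructor
      · intro i hi
        rcases Finset.mem_insert.mp hi with h | h
        · exact h ▸ hw
        · exact (Finset.mem_singleton.mp h) ▸ hw'W
      · rw [Finset.card_insert_of_notMem (by simp [Ne.symm hww]), Finset.card_singleton]
    exact Finset.mem_biUnion.mpr ⟨{w, w'}, hW2 hpair, by simp⟩
  have hbi : E2.biUnion id = W := by
    have := Finset.eq_of_subset_of_card_le hWsub (by rw [hcover, hWt])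
    exact this.symm
  have hE2eq : E2 = W.powersetCard 2 := by
    apply Finset.Subset.antisymm
    · intro e he
      rw [Finset.mem_powersetCard]
      refine ⟨?_, hE2 e he⟩
      intro i hi
      have : i ∈ E2.biUnion id := Finset.mem_biUnion.mpr ⟨e, he, hi⟩
      rwa [hbi] at this
    · exact hW2
  -- constants
  have hconst2 : ((t:ℝ)-1)/(2*(t:ℝ)) = (t.choose 2 : ℝ)/(t:ℝ)^2 := by
    rw [choose2cast t ht2]
    field_simp
  have hconstr : (∏ i ∈ Finset.Icc 1 (r-1), ((t:ℝ)-(i:ℝ)))/((Nat.factorial r : ℝ) * (t:ℝ)^(r-1))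
      = (t.choose r : ℝ)/(t:ℝ)^r := by
    have hIco : Finset.Icc 1 (r-1) = Finset.Ico 1 r := by
      rw [← Finset.Ico_add_one_right_eq_Icc]
      congr 1
      omega
    have hsplit : ∏ i ∈ Finset.range r, ((t:ℝ)-(i:ℝ))
        = (t:ℝ) * ∏ i ∈ Finset.Ico 1 r, ((t:ℝ)-(i:ℝ)) := by
      rw [Finset.range_eq_Ico, Finset.prod_eq_prod_Ico_succ_bot (by omega : 0 < r)]
      simp
    have hdc : (t.descFactorial r : ℝ) = (Nat.factorial r : ℝ) * (t.choose r:ℝ) := by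
      exact_mod_cast congrArg (Nat.cast : ℕ → ℝ) (Nat.descFactorial_eq_factorial_mul_choose t r)
    have hkey : (t:ℝ) * ∏ i ∈ Finset.Ico 1 r, ((t:ℝ)-(i:ℝ))
        = (Nat.factorial r : ℝ) * (t.choose r:ℝ) := by
      rw [← hsplit, ← castdesc, hdc]
    rw [hIco, div_eq_div_iff (by positivity) (by positivity)]
    have hpow : (t:ℝ)^r = (t:ℝ)^(r-1) * t := by
      rw [← pow_succ]
      congr 1
      omega
    rw [hpow]
    calc (∏ i ∈ Finset.Ico 1 r, ((t:ℝ)-(i:ℝ))) * ((t:ℝ)^(r-1) * t)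
        = ((t:ℝ) * ∏ i ∈ Finset.Ico 1 r, ((t:ℝ)-(i:ℝ))) * (t:ℝ)^(r-1) := by ring
      _ = ((Nat.factorial r : ℝ) * (t.choose r:ℝ)) * (t:ℝ)^(r-1) := by rw [hkey]
      _ = (t.choose r:ℝ) * ((Nat.factorial r : ℝ) * (t:ℝ)^(r-1)) := by ring
  have htarget : ((t : ℝ) - 1) / (2 * t)
        + αr * (∏ i ∈ Finset.Icc 1 (r - 1), ((t : ℝ) - i)) / (Nat.factorial r * (t : ℝ) ^ (r - 1))
      = (t.choose 2 : ℝ)/(t:ℝ)^2 + αr * ((t.choose r : ℝ)/(t:ℝ)^r) := by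
    rw [hconst2, ← hconstr, mul_div_assoc]
  rw [htarget]
  constructor
  · -- membership: achieved by the uniform vector on W
    refine ⟨fun i => if i ∈ W then (1/(t:ℝ)) else 0, ?_, ?_⟩
    · constructor
      · intro i
        show 0 ≤ if i ∈ W then (1/(t:ℝ)) else 0
        split
        · positivity
        · exact le_rfl
      · show (∑ i : Fin n, if i ∈ W then (1/(t:ℝ)) else 0) = 1
        rw [Finset.sum_ite_mem, Finset.univ_inter, Finset.sum_const, hWt, nsmul_eq_mul]
        field_simp
    · show (t.choose 2 : ℝ)/(t:ℝ)^2 + αr * ((t.choose r : ℝ)/(t:ℝ)^r)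
          = (∑ e ∈ E2, ∏ i ∈ e, (if i ∈ W then (1/(t:ℝ)) else 0))
            + αr * ∑ e ∈ Er, ∏ i ∈ e, (if i ∈ W then (1/(t:ℝ)) else 0)
      have hv2 : ∑ e ∈ E2, ∏ i ∈ e, (if i ∈ W then (1/(t:ℝ)) else 0)
          = (t.choose 2 : ℝ) * (1/(t:ℝ))^2 := by
        rw [hE2eq]
        have hterm : ∀ e ∈ W.powersetCard 2, ∏ i ∈ e, (if i ∈ W then (1/(t:ℝ)) else 0)
            = (1/(t:ℝ))^2 := by
          intro e he
          rw [Finset.mem_powersetCard] at he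
          rw [Finset.prod_congr rfl (fun i hi => if_pos (he.1 hi)), Finset.prod_const, he.2]
        rw [Finset.sum_congr rfl hterm, Finset.sum_const, Finset.card_powersetCard, hWt,
          nsmul_eq_mul]
      have hvr : ∑ e ∈ Er, ∏ i ∈ e, (if i ∈ W then (1/(t:ℝ)) else 0)
          = (t.choose r : ℝ) * (1/(t:ℝ))^r := by
        rw [← Finset.sum_subset hWr (fun e he hne => ?_)]
        · have hterm : ∀ e ∈ W.powersetCard r, ∏ i ∈ e, (if i ∈ W then (1/(t:ℝ)) else 0)
              = (1/(t:ℝ))^r := by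
            intro e he
            rw [Finset.mem_powersetCard] at he
            rw [Finset.prod_congr rfl (fun i hi => if_pos (he.1 hi)), Finset.prod_const, he.2]
          rw [Finset.sum_congr rfl hterm, Finset.sum_const, Finset.card_powersetCard, hWt,
            nsmul_eq_mul]
        · have : ¬ e ⊆ W := by
            intro hsub
            exact hne (Finset.mem_powersetCard.mpr ⟨hsub, hEr e he⟩)
          obtain ⟨i, hie, hiW⟩ := Finset.not_subset.mp this
          exact Finset.prod_eq_zero hie (if_neg hiW)
      rw [hv2, hvr]
      field_simp
      rw [one_div_pow]; field_simp
  · -- upper bound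
    rintro y ⟨x, hx, rfl⟩
    simp only [stdSimplex', Set.mem_setOf_eq] at hx
    obtain ⟨hx0, hx1⟩ := hx
    set s := ∑ i ∈ W, x i with hs
    have hs0 : 0 ≤ s := Finset.sum_nonneg fun i _ => hx0 i
    have hs1 : s ≤ 1 := by
      rw [← hx1]
      exact Finset.sum_le_sum_of_subset_of_nonneg (Finset.subset_univ W) fun i _ _ => hx0 i
    have h2bound : ∑ e ∈ E2, ∏ i ∈ e, x i ≤ (t.choose 2 : ℝ) * (s/(t:ℝ))^2 := by
      rw [hE2eq]
      have := maclaurin x hx0 W 2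
      rwa [hWt] at this
    have hrbound : ∑ e ∈ Er, ∏ i ∈ e, x i
        ≤ ∑ k ∈ Finset.range (r+1), (t.choose k : ℝ) * (s/(t:ℝ))^k
            * ((1-s)^(r-k)/(Nat.factorial (r-k) : ℝ)) := by
      have hsub : Er ⊆ (Finset.univ : Finset (Fin n)).powersetCard r := fun e he =>
        Finset.mem_powersetCard.mpr ⟨Finset.subset_univ e, hEr e he⟩
      have h1 : ∑ e ∈ Er, ∏ i ∈ e, x i
          ≤ ∑ e ∈ (Finset.univ : Finset (Fin n)).powersetCard r, ∏ i ∈ e, x i :=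
        Finset.sum_le_sum_of_subset_of_nonneg hsub
          (fun e _ _ => Finset.prod_nonneg fun i _ => hx0 i)
      have huniv : W ∪ ((Finset.univ : Finset (Fin n)) \ W) = Finset.univ :=
        Finset.union_sdiff_of_subset (Finset.subset_univ W)
      have hdisj : Disjoint W ((Finset.univ : Finset (Fin n)) \ W) := Finset.disjoint_sdiff
      have h2 := phi_bound x hx0 W ((Finset.univ : Finset (Fin n)) \ W) hdisj r
      rw [huniv] at h2
      have hcomp : ∑ i ∈ (Finset.univ : Finset (Fin n)) \ W, x i = 1 - s := by
        rw [Finset.sum_sdiff_eq_sub (Finset.subset_univ W), hx1]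
      rw [hcomp, hWt] at h2
      calc ∑ e ∈ Er, ∏ i ∈ e, x i ≤ _ := h1
        _ ≤ _ := h2
    have main := scalar t r ht2 hr αr s hαr hαt hs0 hs1
    calc (∑ e ∈ E2, ∏ i ∈ e, x i) + αr * ∑ e ∈ Er, ∏ i ∈ e, x i
        ≤ (t.choose 2 : ℝ) * (s/(t:ℝ))^2
          + αr * (∑ k ∈ Finset.range (r+1), (t.choose k : ℝ) * (s/(t:ℝ))^k
              * ((1-s)^(r-k)/(Nat.factorial (r-k) : ℝ))) :=
          add_le_add h2bound (mul_le_mul_of_nonneg_left hrbound hαr.le)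
      _ ≤ (t.choose 2 : ℝ)/(t:ℝ)^2 + αr * ((t.choose r : ℝ)/(t:ℝ)^r) := main
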